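/- Let n, m ∈ ℕ and 1 ≤ ℓ ≤ mn/2. The number of partitions of ℓ fitting inside an m × n box (at most n parts, each at most m) minus the number of partitions of ℓ−1 fitting inside an m × n box equals the multiplicity ⟨s_{(n)} ∘ s_{(m)}, s_{(mn−ℓ,ℓ)}⟩, and this difference is always nonnegative (Cayley–Sylvester). Equivalently, there is a bijection between plethystic semistandard tableaux of outer shape (n), inner shape (m), and weight (mn−ℓ, ℓ) with entries in {1,2}, and partitions of ℓ contained in an m × n box. -/

import Mathlib

open Finset MvPolynomial

/-- The colexicographic order on rows (read right to left): `s ≤ t` iff `s = t` or at the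
rightmost position where they differ `s` has the smaller entry. -/
def ColexLeRow (m : ℕ) (s t : Fin m → ℕ) : Prop :=
  s = t ∨ ∃ j : Fin m, s j < t j ∧ ∀ k : Fin m, j < k → s k = t k

namespace CS10


/-- A downward-closed finset of naturals is an initial segment. -/
lemma mem_iff_lt_card_of_down (s : Finset ℕ) (hdown : ∀ a b : ℕ, a ≤ b → b ∈ s → a ∈ s)
    (t : ℕ) : t ∈ s ↔ t < s.card := by
  constructor
  · intro ht
    have hsub : Finset.range (t + 1) ⊆ s := by
      intro a ha
      rw [Finset.mem_range] at ha
      exact hdown a t (by omega) ht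
    have hc := Finset.card_le_card hsub
    rw [Finset.card_range] at hc
    omega
  · intro ht
    by_contra hts
    have hsub : s ⊆ Finset.range t := by
      intro b hb
      rw [Finset.mem_range]
      by_contra hbt
      exact hts (hdown t b (by omega) hb)
    have hc := Finset.card_le_card hsub
    rw [Finset.card_range] at hc
    omega

/-- A downward-closed predicate on `Fin N` holds exactly below the count of its elements. -/
lemma finLower {N : ℕ} (q : Fin N → Prop) [DecidablePred q]
    (hq : ∀ a b : Fin N, a ≤ b → q b → q a) (j : Fin N) :
    q j ↔ (j : ℕ) < (univ.filter q).card := by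
  classical
  set s := (univ.filter q).image Fin.val with hs
  have hcard : s.card = (univ.filter q).card :=
    Finset.card_image_of_injective _ Fin.val_injective
  have hdown : ∀ a b : ℕ, a ≤ b → b ∈ s → a ∈ s := by
    intro a b hab hb
    simp only [hs, Finset.mem_image, Finset.mem_filter, Finset.mem_univ, true_and] at hb ⊢
    obtain ⟨k, hk, rfl⟩ := hb
    exact ⟨⟨a, lt_of_le_of_lt hab k.isLt⟩, hq _ k (by simpa [Fin.le_def] using hab) hk, rfl⟩
  have hmem : q j ↔ (j : ℕ) ∈ s := by
    simp only [hs, Finset.mem_image, Finset.mem_filter, Finset.mem_univ, true_and]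
    constructor
    · exact fun h => ⟨j, h, rfl⟩
    · rintro ⟨k, hk, hkj⟩
      rwa [show k = j from Fin.val_injective hkj] at hk
  rw [hmem, mem_iff_lt_card_of_down s hdown, hcard]

lemma card_filter_val_lt {N c : ℕ} (hc : c ≤ N) :
    ((univ : Finset (Fin N)).filter fun j : Fin N => (j : ℕ) < c).card = c := by
  classical
  have key := finLower (N := N) (fun j => (j : ℕ) < c)
    (fun a b hab hb => lt_of_le_of_lt (Fin.le_def.mp hab) hb)
  have hKN : ((univ : Finset (Fin N)).filter fun j : Fin N => (j : ℕ) < c).card ≤ N := by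
    have h3 : (univ : Finset (Fin N)).card = N := by
      rw [Finset.card_univ, Fintype.card_fin]
    exact le_trans (Finset.card_filter_le _ _) (le_of_eq h3)
  rcases lt_trichotomy
    ((univ : Finset (Fin N)).filter fun j : Fin N => (j : ℕ) < c).card c with h | h | h
  · have h2 := (key ⟨_, lt_of_lt_of_le h hc⟩).mp (by simpa using h)
    simp only [Fin.val_mk] at h2
    omega
  · exact h
  · have h2 := (key ⟨c, lt_of_lt_of_le h hKN⟩).mpr (by simpa using h)
    simp only [Fin.val_mk] at h2
    omega

lemma filter_range_lt {M c : ℕ} (hc : c ≤ M) :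
    (Finset.range M).filter (fun t => t < c) = Finset.range c := by
  ext a
  simp only [Finset.mem_filter, Finset.mem_range]
  omega

def twoCount {m : ℕ} (s : Fin m → ℕ) : ℕ := (univ.filter fun j => s j = 2).card

lemma twoCount_le {m : ℕ} (s : Fin m → ℕ) : twoCount s ≤ m := by
  refine le_trans (Finset.card_filter_le _ _) ?_
  rw [Finset.card_univ, Fintype.card_fin]

lemma row_two_iff {m : ℕ} {s : Fin m → ℕ} (h12 : ∀ j, s j = 1 ∨ s j = 2)
    (hmono : Monotone s) (j : Fin m) : s j = 2 ↔ m - twoCount s ≤ (j : ℕ) := by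
  classical
  have hdown : ∀ a b : Fin m, a ≤ b → s b = 1 → s a = 1 := by
    intro a b hab hb
    rcases h12 a with h | h
    · exact h
    · exfalso
      have := hmono hab
      omega
  have key := finLower (fun j => s j = 1) hdown j
  have hsum : (univ.filter fun j : Fin m => s j = 1).card + twoCount s = m := by
    rw [twoCount]
    have h2 : (univ.filter fun j : Fin m => s j = 2)
        = univ.filter (fun j : Fin m => ¬ s j = 1) := by
      apply Finset.filter_congr
      intro j _
      rcases h12 j with h | h <;> simp [h]
    rw [h2, Finset.card_filter_add_card_filter_not, Finset.card_univ, Fintype.card_fin]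
  have hj2 : s j = 2 ↔ ¬ s j = 1 := by rcases h12 j with h | h <;> simp [h]
  rw [hj2, key, not_lt]
  have hjm := j.isLt
  omega

lemma twoCount_threshold {m c : ℕ} (hc : c ≤ m) :
    twoCount (fun j : Fin m => if m - c ≤ (j : ℕ) then 2 else 1) = c := by
  classical
  rw [twoCount]
  have h1 : (univ.filter fun j : Fin m => (if m - c ≤ (j : ℕ) then 2 else 1) = 2)
      = univ.filter fun j : Fin m => ¬ ((j : ℕ) < m - c) := by
    apply Finset.filter_congr
    intro j _
    by_cases h : m - c ≤ (j : ℕ) <;> simp [h] <;> omega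
  rw [h1]
  have h2 := Finset.card_filter_add_card_filter_not
    (s := (univ : Finset (Fin m))) (p := fun j : Fin m => (j : ℕ) < m - c)
  have h3 := card_filter_val_lt (N := m) (c := m - c) (by omega)
  rw [Finset.card_univ, Fintype.card_fin] at h2
  omega

lemma colex_twoCount {m : ℕ} {s t : Fin m → ℕ}
    (hs12 : ∀ j, s j = 1 ∨ s j = 2) (ht12 : ∀ j, t j = 1 ∨ t j = 2)
    (hsm : Monotone s) (htm : Monotone t) (h : ColexLeRow m s t) :
    twoCount s ≤ twoCount t := by
  rcases h with rfl | ⟨j, hjlt, -⟩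
  · exact le_rfl
  · have hs1 : s j = 1 := by
      rcases hs12 j with h | h
      · exact h
      · rcases ht12 j with h' | h' <;> omega
    have ht2 : t j = 2 := by rcases ht12 j with h | h <;> omega
    have h1 : ¬ (m - twoCount s ≤ (j : ℕ)) := by
      intro hle
      have := (row_two_iff hs12 hsm j).mpr hle
      omega
    have h2 := (row_two_iff ht12 htm j).mp ht2
    have h3 := twoCount_le s
    have h4 := twoCount_le t
    have h5 := j.isLt
    omega

end CS10

namespace CS10

def part1Equiv (m n L : ℕ) :
    {T : Fin n → Fin m → ℕ //
        (∀ i j, T i j = 1 ∨ T i j = 2) ∧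
        (∀ i, Monotone (T i)) ∧
        (∀ i₁ i₂ : Fin n, i₁ ≤ i₂ → ColexLeRow m (T i₁) (T i₂)) ∧
        (∑ i, (Finset.univ.filter fun j => T i j = 2).card) = L} ≃
      {p : Fin n → ℕ // Antitone p ∧ (∀ i, p i ≤ m) ∧ ∑ i, p i = L} where
  toFun := fun T => ⟨fun i => twoCount (T.1 i.rev), by
    obtain ⟨T, h12, hmono, hcolex, hsum⟩ := T
    refine ⟨?_, ?_, ?_⟩
    · intro i i' hii'
      exact colex_twoCount (h12 _) (h12 _) (hmono _) (hmono _)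
        (hcolex _ _ (Fin.rev_le_rev.mpr hii'))
    · intro i
      exact twoCount_le _
    · refine Eq.trans ?_ hsum
      exact Fintype.sum_bijective Fin.rev Fin.rev_bijective _ _ (fun i => rfl)⟩
  invFun := fun p => ⟨fun i j => if m - p.1 i.rev ≤ (j : ℕ) then 2 else 1, by
    obtain ⟨p, hanti, hle, hsum⟩ := p
    refine ⟨?_, ?_, ?_, ?_⟩
    · intro i j
      by_cases h : m - p i.rev ≤ (j : ℕ) <;> simp [h]
    · intro i j k hjk
      by_cases h : m - p i.rev ≤ (j : ℕ)
      · have hk : m - p i.rev ≤ (k : ℕ) := le_trans h (Fin.le_def.mp hjk)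
        simp [h, hk]
      · by_cases h' : m - p i.rev ≤ (k : ℕ) <;> simp [h, h']
    · intro i₁ i₂ h12'
      show ColexLeRow m (fun j : Fin m => if m - p i₁.rev ≤ (j : ℕ) then 2 else 1)
        (fun j : Fin m => if m - p i₂.rev ≤ (j : ℕ) then 2 else 1)
      have hab : p i₁.rev ≤ p i₂.rev := hanti (Fin.rev_le_rev.mpr h12')
      rcases eq_or_lt_of_le hab with heq | hlt
      · left
        funext j
        rw [heq]
      · right
        have hbm : p i₂.rev ≤ m := hle _
        have hm0 : 0 < m := by omega
        refine ⟨⟨m - p i₁.rev - 1, by omega⟩, ?_, ?_⟩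
        · have c1 : ¬ (m - p i₁.rev ≤ m - p i₁.rev - 1) := by omega
          have c2 : m - p i₂.rev ≤ m - p i₁.rev - 1 := by omega
          simp only [Fin.val_mk]
          rw [if_neg c1, if_pos c2]
          norm_num
        · intro k hk
          rw [Fin.lt_def] at hk
          simp only [Fin.val_mk] at hk
          have hk' : m - p i₁.rev ≤ (k : ℕ) := by omega
          have hk'' : m - p i₂.rev ≤ (k : ℕ) := by omega
          simp [hk', hk'']
    · have hcount : ∀ i : Fin n,
          (univ.filter fun j : Fin m => (if m - p i.rev ≤ (j : ℕ) then 2 else 1) = 2).card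
            = p i.rev := fun i => twoCount_threshold (hle _)
      calc (∑ i, (univ.filter fun j : Fin m =>
              (if m - p i.rev ≤ (j : ℕ) then 2 else 1) = 2).card)
          = ∑ i, p i.rev := Finset.sum_congr rfl fun i _ => hcount i
        _ = ∑ i, p i := Fintype.sum_bijective Fin.rev Fin.rev_bijective _ _ (fun i => rfl)
        _ = L := hsum⟩
  left_inv := fun T => by
    obtain ⟨T, h12, hmono, hcolex, hsum⟩ := T
    apply Subtype.ext
    funext i j
    show (if m - twoCount (T i.rev.rev) ≤ (j : ℕ) then 2 else 1) = T i j
    rw [Fin.rev_rev]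
    rcases h12 i j with h | h
    · rw [if_neg, h]
      intro hc
      have := (row_two_iff (h12 i) (hmono i) j).mpr hc
      omega
    · rw [if_pos ((row_two_iff (h12 i) (hmono i) j).mp h), h]
  right_inv := fun p => by
    obtain ⟨p, hanti, hle, hsum⟩ := p
    apply Subtype.ext
    funext i
    show twoCount (fun j : Fin m => if m - p i.rev.rev ≤ (j : ℕ) then 2 else 1) = p i
    rw [Fin.rev_rev]
    exact twoCount_threshold (hle i)

variable {m n : ℕ}

/-- multiplicity vector of a partition -/
def dOf (m : ℕ) {n : ℕ} (p : Fin n → ℕ) : Fin (m+1) → ℕ :=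
  fun i => (univ.filter fun j => p j = (i : ℕ)).card

/-- number of parts exceeding `t'`, computed from a multiplicity vector -/
def Cfun {m : ℕ} (d : Fin (m+1) → ℕ) (t' : ℕ) : ℕ :=
  ∑ i : Fin (m+1), if t' < (i : ℕ) then d i else 0

/-- number of parts exceeding `t'` -/
def cc {n : ℕ} (p : Fin n → ℕ) (t' : ℕ) : ℕ := (univ.filter fun k => t' < p k).card

/-- partition reconstructed from a multiplicity vector -/
def pOf {m : ℕ} (n : ℕ) (d : Fin (m+1) → ℕ) : Fin n → ℕ :=
  fun j => ((Finset.range m).filter fun t' => (j : ℕ) < Cfun d t').card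

lemma fin_mk_p (p : Fin n → ℕ) (hp : ∀ i, p i ≤ m) (j : Fin n) : p j < m + 1 := by
  have := hp j; omega

lemma dOf_sum (p : Fin n → ℕ) (hp : ∀ i, p i ≤ m) : ∑ i, dOf m p i = n := by
  classical
  have h := Finset.card_eq_sum_card_fiberwise
    (f := fun j : Fin n => (⟨p j, fin_mk_p p hp j⟩ : Fin (m+1)))
    (s := univ) (t := univ) (fun x _ => Finset.mem_univ _)
  rw [Finset.card_univ, Fintype.card_fin] at h
  refine Eq.trans ?_ h.symm
  refine Finset.sum_congr rfl fun b _ => ?_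
  unfold dOf
  exact congrArg Finset.card (Finset.filter_congr fun x _ => by simp [Fin.ext_iff])

lemma dOf_wsum (p : Fin n → ℕ) (hp : ∀ i, p i ≤ m) :
    ∑ i : Fin (m+1), (i : ℕ) * dOf m p i = ∑ j, p j := by
  classical
  have h := Finset.sum_fiberwise_of_maps_to
    (g := fun j : Fin n => (⟨p j, fin_mk_p p hp j⟩ : Fin (m+1)))
    (s := (univ : Finset (Fin n))) (t := (univ : Finset (Fin (m+1))))
    (fun x _ => Finset.mem_univ _) p
  refine Eq.trans ?_ h
  refine Finset.sum_congr rfl fun b _ => ?_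
  have h2 : ∀ x ∈ univ.filter fun x : Fin n =>
      (⟨p x, fin_mk_p p hp x⟩ : Fin (m+1)) = b, p x = (b : ℕ) := by
    intro x hx
    rw [Finset.mem_filter] at hx
    have h3 := hx.2
    rw [Fin.ext_iff] at h3
    simpa using h3
  have h3 : (univ.filter fun x : Fin n => p x = (b : ℕ))
      = univ.filter fun x : Fin n => (⟨p x, fin_mk_p p hp x⟩ : Fin (m+1)) = b :=
    Finset.filter_congr fun x _ => by simp [Fin.ext_iff]
  rw [Finset.sum_congr rfl h2, Finset.sum_const, smul_eq_mul]
  unfold dOf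
  rw [h3, mul_comm]

lemma cc_eq_Cfun_dOf (p : Fin n → ℕ) (hp : ∀ i, p i ≤ m) (t' : ℕ) :
    cc p t' = Cfun (dOf m p) t' := by
  classical
  have h := Finset.card_eq_sum_card_fiberwise
    (f := fun j : Fin n => (⟨p j, fin_mk_p p hp j⟩ : Fin (m+1)))
    (s := univ.filter fun k => t' < p k) (t := univ) (fun x _ => Finset.mem_univ _)
  unfold cc Cfun
  rw [h]
  refine Finset.sum_congr rfl fun b _ => ?_
  rw [Finset.filter_filter]
  by_cases hb : t' < (b : ℕ)
  · rw [if_pos hb]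
    unfold dOf
    refine congrArg Finset.card (Finset.filter_congr fun x _ => ?_)
    constructor
    · rintro ⟨h1, h2⟩
      rw [Fin.ext_iff] at h2
      simpa using h2
    · intro h1
      refine ⟨by omega, ?_⟩
      rw [Fin.ext_iff]
      simpa using h1
  · rw [if_neg hb, Finset.card_eq_zero, Finset.filter_eq_empty_iff]
    intro x _
    rintro ⟨h1, h2⟩
    rw [Fin.ext_iff] at h2
    simp at h2
    omega

lemma key_lt (p : Fin n → ℕ) (hanti : Antitone p) (t' : ℕ) (j : Fin n) :
    t' < p j ↔ (j : ℕ) < cc p t' :=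
  finLower (fun k => t' < p k) (fun a b hab hb => lt_of_lt_of_le hb (hanti hab)) j

lemma p_formula (p : Fin n → ℕ) (hanti : Antitone p) (hp : ∀ i, p i ≤ m) (j : Fin n) :
    p j = ((Finset.range m).filter fun t' => (j : ℕ) < cc p t').card := by
  classical
  have h1 : ((Finset.range m).filter fun t' => (j : ℕ) < cc p t')
      = (Finset.range m).filter fun t' => t' < p j :=
    Finset.filter_congr fun t' _ => (key_lt p hanti t' j).symm
  rw [h1, filter_range_lt (hp j), Finset.card_range]

lemma Cfun_le_sum (d : Fin (m+1) → ℕ) (t' : ℕ) : Cfun d t' ≤ ∑ i : Fin (m+1), d i :=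
  Finset.sum_le_sum fun i _ => by split <;> omega

lemma Cfun_anti (d : Fin (m+1) → ℕ) : Antitone (Cfun (m := m) d) := by
  intro a b hab
  refine Finset.sum_le_sum fun i _ => ?_
  split_ifs <;> omega

lemma Cfun_eq_zero (d : Fin (m+1) → ℕ) (t' : ℕ) (h : m ≤ t') : Cfun d t' = 0 :=
  Finset.sum_eq_zero fun i _ => if_neg (by have := i.isLt; omega)

lemma pOf_le (d : Fin (m+1) → ℕ) (j : Fin n) : pOf n d j ≤ m :=
  le_trans (Finset.card_filter_le _ _) (le_of_eq (Finset.card_range m))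

lemma pOf_anti (d : Fin (m+1) → ℕ) : Antitone (pOf (m := m) n d) := by
  intro a b hab
  refine Finset.card_le_card ?_
  intro t' ht'
  rw [Finset.mem_filter] at ht' ⊢
  have hv : (a : ℕ) ≤ (b : ℕ) := Fin.le_def.mp hab
  exact ⟨ht'.1, by omega⟩

lemma key' (d : Fin (m+1) → ℕ) (t' : ℕ) (j : Fin n) :
    t' < pOf n d j ↔ (t' < m ∧ (j : ℕ) < Cfun d t') := by
  classical
  have hdown : ∀ a b : ℕ, a ≤ b →
      b ∈ (Finset.range m).filter (fun t'' => (j : ℕ) < Cfun d t'') →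
      a ∈ (Finset.range m).filter (fun t'' => (j : ℕ) < Cfun d t'') := by
    intro a b hab hb
    rw [Finset.mem_filter, Finset.mem_range] at hb ⊢
    exact ⟨by omega, lt_of_lt_of_le hb.2 (Cfun_anti d hab)⟩
  have h := mem_iff_lt_card_of_down _ hdown t'
  rw [Finset.mem_filter, Finset.mem_range] at h
  exact h.symm

lemma cc_pOf (d : Fin (m+1) → ℕ) (hd1 : ∑ i : Fin (m+1), d i = n) (t' : ℕ) :
    cc (pOf n d) t' = Cfun d t' := by
  classical
  unfold cc
  have h1 : (univ.filter fun k : Fin n => t' < pOf n d k)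
      = univ.filter fun k : Fin n => (t' < m ∧ (k : ℕ) < Cfun d t') :=
    Finset.filter_congr fun k _ => key' d t' k
  rw [h1]
  by_cases ht : t' < m
  · have h2 : (univ.filter fun k : Fin n => (t' < m ∧ (k : ℕ) < Cfun d t'))
        = univ.filter fun k : Fin n => (k : ℕ) < Cfun d t' :=
      Finset.filter_congr fun k _ => by simp [ht]
    rw [h2, card_filter_val_lt (le_trans (Cfun_le_sum d t') (le_of_eq hd1))]
  · have h2 : (univ.filter fun k : Fin n => (t' < m ∧ (k : ℕ) < Cfun d t')) = ∅ := by
      rw [Finset.filter_eq_empty_iff]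
      intro x _ hx
      exact ht hx.1
    rw [h2, Finset.card_empty, Cfun_eq_zero d t' (by omega)]

lemma pOf_sum (d : Fin (m+1) → ℕ) (t : ℕ) (hd1 : ∑ i : Fin (m+1), d i = n)
    (hd2 : ∑ i : Fin (m+1), (i : ℕ) * d i = t) : ∑ j, pOf n d j = t := by
  classical
  have h1 : ∀ j : Fin n, pOf n d j
      = ∑ t' ∈ Finset.range m, if (j : ℕ) < Cfun d t' then 1 else 0 :=
    fun j => Finset.card_filter _ _
  rw [Finset.sum_congr rfl fun j _ => h1 j, Finset.sum_comm]
  have h2 : ∀ t' ∈ Finset.range m,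
      (∑ j : Fin n, if (j : ℕ) < Cfun d t' then 1 else 0) = Cfun d t' := by
    intro t' _
    rw [← Finset.card_filter]
    exact card_filter_val_lt (le_trans (Cfun_le_sum d t') (le_of_eq hd1))
  rw [Finset.sum_congr rfl h2]
  have h3 : ∀ t' ∈ Finset.range m,
      Cfun d t' = ∑ i : Fin (m+1), if t' < (i : ℕ) then d i else 0 := fun _ _ => rfl
  rw [Finset.sum_congr rfl h3, Finset.sum_comm]
  have h4 : ∀ i : Fin (m+1),
      (∑ t' ∈ Finset.range m, if t' < (i : ℕ) then d i else 0) = (i : ℕ) * d i := by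
    intro i
    rw [← Finset.sum_filter, filter_range_lt (by have := i.isLt; omega),
      Finset.sum_const, Finset.card_range, smul_eq_mul]
  rw [Finset.sum_congr rfl fun i _ => h4 i, hd2]

lemma Cfun_succ_step (d : Fin (m+1) → ℕ) (i : Fin (m+1)) (hi : 0 < (i : ℕ)) :
    Cfun d ((i : ℕ) - 1) = d i + Cfun d (i : ℕ) := by
  classical
  have hpt : ∀ k : Fin (m+1), (if (i : ℕ) - 1 < (k : ℕ) then d k else 0)
      = (if k = i then d k else 0) + (if (i : ℕ) < (k : ℕ) then d k else 0) := by
    intro k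
    by_cases hk : k = i
    · subst hk
      rw [if_pos (by omega), if_pos rfl, if_neg (by omega), add_zero]
    · have hkv : (k : ℕ) ≠ (i : ℕ) := fun h => hk (Fin.ext h)
      rw [if_neg hk]
      by_cases h2 : (i : ℕ) < (k : ℕ)
      · rw [if_pos (by omega), if_pos h2, zero_add]
      · rw [if_neg (by omega), if_neg h2]
  unfold Cfun
  rw [Finset.sum_congr rfl fun k _ => hpt k, Finset.sum_add_distrib,
    Finset.sum_ite_eq' univ i, if_pos (Finset.mem_univ i)]

lemma Cfun_zero_step (d : Fin (m+1) → ℕ) :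
    ∑ i : Fin (m+1), d i = d 0 + Cfun d 0 := by
  classical
  have hpt : ∀ k : Fin (m+1),
      d k = (if k = 0 then d k else 0) + (if 0 < (k : ℕ) then d k else 0) := by
    intro k
    by_cases hk : k = 0
    · subst hk
      rw [if_pos rfl, if_neg (by simp), add_zero]
    · have hkv : 0 < (k : ℕ) := Nat.pos_of_ne_zero (fun h => hk (Fin.ext (by simp [h])))
      rw [if_neg hk, if_pos hkv, zero_add]
  rw [Finset.sum_congr rfl fun k _ => hpt k, Finset.sum_add_distrib,
    Finset.sum_ite_eq' univ (0 : Fin (m+1)), if_pos (Finset.mem_univ _)]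
  rfl

lemma d_eq_of_Cfun {d e : Fin (m+1) → ℕ} (hd : ∑ i : Fin (m+1), d i = n)
    (he : ∑ i : Fin (m+1), e i = n)
    (h : ∀ t', Cfun d t' = Cfun e t') : d = e := by
  funext i
  by_cases hi : (i : ℕ) = 0
  · have hi0 : i = 0 := Fin.ext (by simp [hi])
    subst hi0
    have h1 := Cfun_zero_step d
    have h2 := Cfun_zero_step e
    rw [hd] at h1
    rw [he] at h2
    have h3 := h 0
    omega
  · have h1 := Cfun_succ_step d i (by omega)
    have h2 := Cfun_succ_step e i (by omega)
    have h3 := h ((i : ℕ) - 1)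
    have h4 := h (i : ℕ)
    omega

abbrev DIdx (m n t : ℕ) : Type :=
  {d : Fin (m+1) → ℕ // (∑ i : Fin (m+1), d i = n) ∧ (∑ i : Fin (m+1), (i : ℕ) * d i = t)}

instance DIdx.finite (m n t : ℕ) : Finite (DIdx m n t) := by
  refine Finite.of_injective (fun d : DIdx m n t => fun i : Fin (m+1) =>
    (⟨d.1 i, by
      have h := Finset.single_le_sum (f := d.1) (fun i _ => Nat.zero_le _) (Finset.mem_univ i)
      have h2 := d.2.1
      omega⟩ : Fin (n+1))) ?_
  intro a b hab
  apply Subtype.ext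
  funext i
  have := congrFun hab i
  simpa [Fin.ext_iff] using this

instance part_finite (m n t : ℕ) :
    Finite {p : Fin n → ℕ // Antitone p ∧ (∀ i, p i ≤ m) ∧ ∑ i, p i = t} := by
  refine Finite.of_injective
    (fun p : {p : Fin n → ℕ // Antitone p ∧ (∀ i, p i ≤ m) ∧ ∑ i, p i = t} =>
      fun i : Fin n => (⟨p.1 i, by have := p.2.2.1 i; omega⟩ : Fin (m+1))) ?_
  intro a b hab
  apply Subtype.ext
  funext i
  have := congrFun hab i
  simpa [Fin.ext_iff] using this

lemma card_part_le_DIdx (m n t : ℕ) :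
    Nat.card {p : Fin n → ℕ // Antitone p ∧ (∀ i, p i ≤ m) ∧ ∑ i, p i = t}
      ≤ Nat.card (DIdx m n t) := by
  classical
  refine Nat.card_le_card_of_injective
    (fun p => (⟨dOf m p.1, dOf_sum p.1 p.2.2.1,
      Eq.trans (dOf_wsum p.1 p.2.2.1) p.2.2.2⟩ : DIdx m n t)) ?_
  intro a b hab
  apply Subtype.ext
  have hd : dOf m a.1 = dOf m b.1 := congrArg Subtype.val hab
  have hcc : ∀ t', cc a.1 t' = cc b.1 t' := by
    intro t'
    rw [cc_eq_Cfun_dOf a.1 a.2.2.1 t', cc_eq_Cfun_dOf b.1 b.2.2.1 t', hd]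
  funext j
  rw [p_formula a.1 a.2.1 a.2.2.1 j, p_formula b.1 b.2.1 b.2.2.1 j]
  exact congrArg Finset.card (Finset.filter_congr fun t' _ => by rw [hcc t'])

lemma card_DIdx_le_part (m n t : ℕ) :
    Nat.card (DIdx m n t)
      ≤ Nat.card {p : Fin n → ℕ // Antitone p ∧ (∀ i, p i ≤ m) ∧ ∑ i, p i = t} := by
  classical
  refine Nat.card_le_card_of_injective
    (fun d => ⟨pOf n d.1, pOf_anti d.1, pOf_le d.1, pOf_sum d.1 t d.2.1 d.2.2⟩) ?_
  intro a b hab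
  apply Subtype.ext
  have hp : pOf n a.1 = pOf n b.1 := congrArg Subtype.val hab
  refine d_eq_of_Cfun a.2.1 b.2.1 fun t' => ?_
  rw [← cc_pOf a.1 a.2.1 t', ← cc_pOf b.1 b.2.1 t', hp]



/-- Abstract sl2 lemma: a vector of positive weight killed by the lowering operator
and locally nilpotent under the raising operator is zero. -/
lemma sl2_vanish {V : Type*} [AddCommGroup V] [Module ℚ V]
    (E F H : V →ₗ[ℚ] V)
    (hEF : ∀ v, E (F v) - F (E v) = H v)
    (hHE : ∀ v, H (E v) - E (H v) = (2 : ℚ) • E v)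
    (lam : ℚ) (hlam : 0 < lam) (v : V) (hHv : H v = lam • v) (hFv : F v = 0)
    (K : ℕ) (hK : (⇑E)^[K] v = 0) : v = 0 := by
  set u : ℕ → V := fun k => (⇑E)^[k] v with hu_def
  have hu : ∀ k, u (k + 1) = E (u k) := fun k => Function.iterate_succ_apply' _ _ _
  have h1 : ∀ k, H (u k) = (lam + 2 * k) • u k := by
    intro k
    induction k with
    | zero => simpa [hu_def] using hHv
    | succ k ih =>
      rw [hu]
      have h2 := hHE (u k)
      have h3 : H (E (u k)) = E (H (u k)) + (2 : ℚ) • E (u k) := by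
        rw [← h2]; abel
      rw [h3, ih, map_smul, ← hu]
      rw [← add_smul]
      congr 1
      push_cast
      ring
  have h2 : ∀ k, F (u (k + 1)) = (-(((k : ℚ) + 1) * lam + k * (k + 1))) • u k := by
    intro k
    induction k with
    | zero =>
      rw [hu]
      have h3 := hEF (u 0)
      have h4 : F (E (u 0)) = E (F (u 0)) - H (u 0) := by rw [← h3]; abel
      have h5 : F (u 0) = 0 := hFv
      rw [h4, h5, map_zero, h1 0, zero_sub]
      norm_num
    | succ k ih =>
      rw [hu]
      have h3 := hEF (u (k + 1))
      have h4 : F (E (u (k + 1))) = E (F (u (k + 1))) - H (u (k + 1)) := by rw [← h3]; abel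
      rw [h4, ih, map_smul, h1 (k + 1), ← hu, ← sub_smul]
      congr 1
      push_cast
      ring
  by_contra hv0
  have h3 : ∀ k, u k ≠ 0 := by
    intro k
    induction k with
    | zero => simpa [hu_def] using hv0
    | succ k ih =>
      intro h0
      apply ih
      have h4 := h2 k
      rw [h0, map_zero] at h4
      have h5 : (-(((k : ℚ) + 1) * lam + k * (k + 1))) ≠ 0 := by
        have hk1 : (0 : ℚ) < ((k : ℚ) + 1) * lam := by positivity
        have hk2 : (0 : ℚ) ≤ (k : ℚ) * (k + 1) := by positivity
        intro hcon
        nlinarith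
      have := smul_eq_zero.mp h4.symm
      tauto
  exact h3 K hK

abbrev Pq (m : ℕ) := MvPolynomial (Fin (m + 1)) ℚ

noncomputable def Eop (m : ℕ) : Derivation ℚ (Pq m) (Pq m) :=
  MvPolynomial.mkDerivation ℚ fun i : Fin (m + 1) =>
    (((i : ℕ) : ℚ) * ((m : ℚ) + 1 - ((i : ℕ) : ℚ))) •
      MvPolynomial.X (⟨(i : ℕ) - 1, by omega⟩ : Fin (m + 1))

noncomputable def Fop (m : ℕ) : Derivation ℚ (Pq m) (Pq m) :=
  MvPolynomial.mkDerivation ℚ fun i : Fin (m + 1) =>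
    if h : (i : ℕ) < m then MvPolynomial.X (⟨(i : ℕ) + 1, by omega⟩ : Fin (m + 1)) else 0

noncomputable def Hop (m : ℕ) : Derivation ℚ (Pq m) (Pq m) :=
  MvPolynomial.mkDerivation ℚ fun i : Fin (m + 1) =>
    ((m : ℚ) - 2 * ((i : ℕ) : ℚ)) • MvPolynomial.X i

lemma EF_eq_H (m : ℕ) : ∀ v, Eop m (Fop m v) - Fop m (Eop m v) = Hop m v := by
  have h : ⁅Eop m, Fop m⁆ = Hop m := by
    apply MvPolynomial.derivation_ext
    intro i
    rw [Derivation.commutator_apply]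
    rw [show (Hop m) (X i) = ((m : ℚ) - 2 * ((i : ℕ) : ℚ)) • X i from mkDerivation_X ..]
    rw [show (Fop m) (X i) = if h : (i : ℕ) < m then
        X (⟨(i : ℕ) + 1, by omega⟩ : Fin (m + 1)) else 0 from mkDerivation_X ..]
    rw [show (Eop m) (X i) = (((i : ℕ) : ℚ) * ((m : ℚ) + 1 - ((i : ℕ) : ℚ))) •
        X (⟨(i : ℕ) - 1, by omega⟩ : Fin (m + 1)) from mkDerivation_X ..]
    by_cases hi : (i : ℕ) < m
    · rw [dif_pos hi, Derivation.map_smul]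
      rw [show (Eop m) (X (⟨(i : ℕ) + 1, by omega⟩ : Fin (m + 1)))
          = ((((i : ℕ) + 1 : ℕ) : ℚ) * ((m : ℚ) + 1 - (((i : ℕ) + 1 : ℕ) : ℚ))) •
            X (⟨((i : ℕ) + 1) - 1, by omega⟩ : Fin (m + 1)) from mkDerivation_X ..]
      rw [show (Fop m) (X (⟨(i : ℕ) - 1, by omega⟩ : Fin (m + 1)))
          = if h : ((i : ℕ) - 1) < m then
            X (⟨((i : ℕ) - 1) + 1, by omega⟩ : Fin (m + 1)) else 0 from mkDerivation_X ..]
      rw [dif_pos (by omega)]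
      have he1 : (⟨((i : ℕ) + 1) - 1, by omega⟩ : Fin (m + 1)) = i := Fin.ext (by simp)
      rw [he1]
      by_cases hi0 : (i : ℕ) = 0
      · rw [show (((i : ℕ) : ℚ) * ((m : ℚ) + 1 - ((i : ℕ) : ℚ))) = 0 by rw [hi0]; norm_num]
        rw [zero_smul, sub_zero]
        congr 1
        rw [hi0]
        push_cast
        ring
      · have he2 : (⟨((i : ℕ) - 1) + 1, by omega⟩ : Fin (m + 1)) = i := by
          apply Fin.ext
          simp only [Fin.val_mk]
          omega
        rw [he2, ← sub_smul]
        congr 1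
        push_cast
        ring
    · have him : (i : ℕ) = m := by omega
      rw [dif_neg hi, map_zero, Derivation.map_smul]
      rw [show (Fop m) (X (⟨(i : ℕ) - 1, by omega⟩ : Fin (m + 1)))
          = if h : ((i : ℕ) - 1) < m then
            X (⟨((i : ℕ) - 1) + 1, by omega⟩ : Fin (m + 1)) else 0 from mkDerivation_X ..]
      by_cases hm0 : m = 0
      · subst hm0
        have hiz : (i : ℕ) = 0 := by omega
        rw [dif_neg (by omega)]
        simp [hiz]
      · rw [dif_pos (by omega)]
        have he2 : (⟨((i : ℕ) - 1) + 1, by omega⟩ : Fin (m + 1)) = i := by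
          apply Fin.ext
          simp only [Fin.val_mk]
          omega
        rw [he2, zero_sub, ← neg_smul]
        congr 1
        rw [him]
        push_cast
        ring
  intro v
  rw [← h, Derivation.commutator_apply]



lemma HE_eq (m : ℕ) : ∀ v, Hop m (Eop m v) - Eop m (Hop m v) = (2 : ℚ) • Eop m v := by
  have h : ⁅Hop m, Eop m⁆ = (2 : ℚ) • Eop m := by
    apply MvPolynomial.derivation_ext
    intro i
    rw [Derivation.commutator_apply, Derivation.smul_apply]
    rw [show (Eop m) (X i) = (((i : ℕ) : ℚ) * ((m : ℚ) + 1 - ((i : ℕ) : ℚ))) •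
        X (⟨(i : ℕ) - 1, by omega⟩ : Fin (m + 1)) from mkDerivation_X ..]
    rw [show (Hop m) (X i) = ((m : ℚ) - 2 * ((i : ℕ) : ℚ)) • X i from mkDerivation_X ..]
    rw [Derivation.map_smul, Derivation.map_smul]
    rw [show (Hop m) (X (⟨(i : ℕ) - 1, by omega⟩ : Fin (m + 1)))
        = ((m : ℚ) - 2 * ((((i : ℕ) - 1 : ℕ)) : ℚ)) • X (⟨(i : ℕ) - 1, by omega⟩ : Fin (m + 1))
          from mkDerivation_X ..]
    rw [show (Eop m) (X i) = (((i : ℕ) : ℚ) * ((m : ℚ) + 1 - ((i : ℕ) : ℚ))) •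
        X (⟨(i : ℕ) - 1, by omega⟩ : Fin (m + 1)) from mkDerivation_X ..]
    rw [smul_smul, smul_smul, smul_smul, ← sub_smul]
    congr 1
    by_cases hi0 : (i : ℕ) = 0
    · rw [hi0]
      norm_num
    · push_cast [Nat.cast_sub (by omega : 1 ≤ (i : ℕ))]
      ring
  intro v
  rw [← Derivation.smul_apply, ← h, Derivation.commutator_apply]


noncomputable def bfam (m n t : ℕ) : DIdx m n t → Pq m :=
  fun d => monomial (Finsupp.equivFunOnFinite.symm d.1) 1

noncomputable abbrev Wsp (m n t : ℕ) : Submodule ℚ (Pq m) :=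
  Submodule.span ℚ (Set.range (bfam m n t))

lemma bfam_li (m n t : ℕ) : LinearIndependent ℚ (bfam m n t) := by
  have h := (MvPolynomial.basisMonomials (Fin (m+1)) ℚ).linearIndependent
  have h2 := h.comp (fun d : DIdx m n t => Finsupp.equivFunOnFinite.symm d.1)
    (fun a b hab => Subtype.ext (Finsupp.equivFunOnFinite.symm.injective hab))
  have h3 : (⇑(MvPolynomial.basisMonomials (Fin (m+1)) ℚ) ∘
      fun d : DIdx m n t => Finsupp.equivFunOnFinite.symm d.1) = bfam m n t := by
    funext d
    simp [bfam, MvPolynomial.coe_basisMonomials]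
  rwa [h3] at h2

lemma mkDer_monomial (m : ℕ) (f : Fin (m+1) → Pq m) (s : Fin (m+1) →₀ ℕ) :
    MvPolynomial.mkDerivation ℚ f (monomial s 1)
      = ∑ i : Fin (m+1), monomial (s - Finsupp.single i 1) ((s i : ℕ) : ℚ) • f i := by
  rw [MvPolynomial.mkDerivation_monomial, one_smul,
    Finsupp.sum_fintype _ _ (fun i => by rw [Nat.cast_zero, monomial_zero, zero_smul])]

lemma single_decomp (m : ℕ) (s : Fin (m+1) →₀ ℕ) (i : Fin (m+1)) (hi : s i ≠ 0) :
    s = (s - Finsupp.single i 1) + Finsupp.single i 1 := by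
  ext j
  rw [Finsupp.add_apply, Finsupp.tsub_apply]
  by_cases h : i = j
  · subst h
    rw [Finsupp.single_eq_same]
    omega
  · rw [Finsupp.single_eq_of_ne' h]
    omega

lemma sum_add_single (m : ℕ) (y : Fin (m+1) →₀ ℕ) (k : Fin (m+1)) :
    (∑ j : Fin (m+1), ((y + Finsupp.single k 1 : Fin (m+1) →₀ ℕ)) j) = (∑ j : Fin (m+1), y j) + 1 := by
  simp only [Finsupp.add_apply, Finsupp.single_apply, Finset.sum_add_distrib]
  congr 1
  rw [Finset.sum_ite_eq univ k (fun _ => 1), if_pos (Finset.mem_univ _)]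

lemma wsum_add_single (m : ℕ) (y : Fin (m+1) →₀ ℕ) (k : Fin (m+1)) :
    (∑ j : Fin (m+1), (j : ℕ) * ((y + Finsupp.single k 1 : Fin (m+1) →₀ ℕ)) j)
      = (∑ j : Fin (m+1), (j : ℕ) * y j) + (k : ℕ) := by
  simp only [Finsupp.add_apply, Finsupp.single_apply, mul_add, Finset.sum_add_distrib]
  congr 1
  have h : ∀ j : Fin (m+1), (j : ℕ) * (if k = j then 1 else 0) = (if k = j then (j : ℕ) else 0) := by
    intro j
    split <;> simp
  rw [Finset.sum_congr rfl fun j _ => h j,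
    Finset.sum_ite_eq univ k (fun j : Fin (m+1) => (j : ℕ)), if_pos (Finset.mem_univ _)]

lemma term_eq1 (m : ℕ) (s : Fin (m+1) →₀ ℕ) (i i' : Fin (m+1)) :
    monomial (s - Finsupp.single i 1) ((s i : ℕ) : ℚ) • (X i' : Pq m)
      = ((s i : ℕ) : ℚ) •
        monomial ((s - Finsupp.single i 1) + Finsupp.single i' 1) (1 : ℚ) := by
  rw [smul_eq_mul, show (X i' : Pq m) = monomial (Finsupp.single i' 1) 1 from rfl,
    MvPolynomial.monomial_mul, mul_one, MvPolynomial.smul_monomial, smul_eq_mul, mul_one]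

lemma term_eqc (m : ℕ) (s : Fin (m+1) →₀ ℕ) (i i' : Fin (m+1)) (c : ℚ) :
    monomial (s - Finsupp.single i 1) ((s i : ℕ) : ℚ) • (c • (X i' : Pq m))
      = (((s i : ℕ) : ℚ) * c) •
        monomial ((s - Finsupp.single i 1) + Finsupp.single i' 1) (1 : ℚ) := by
  rw [smul_comm, term_eq1, smul_smul, mul_comm]

lemma coe_symm_equivFun (m : ℕ) (f : Fin (m+1) → ℕ) (j : Fin (m+1)) :
    (Finsupp.equivFunOnFinite.symm f) j = f j := rfl

lemma mem_step (m n : ℕ) (s : Fin (m+1) →₀ ℕ) (i i' : Fin (m+1)) (hsi : s i ≠ 0)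
    (t' : ℕ) (hn : ∑ j : Fin (m+1), s j = n)
    (hw : (∑ j : Fin (m+1), (j : ℕ) * s j) + (i' : ℕ) = t' + (i : ℕ)) :
    (monomial ((s - Finsupp.single i 1) + Finsupp.single i' 1) (1 : ℚ)) ∈ Wsp m n t' := by
  have h1 := sum_add_single m (s - Finsupp.single i 1) i'
  have h2 := sum_add_single m (s - Finsupp.single i 1) i
  rw [← single_decomp m s i hsi] at h2
  have h3 := wsum_add_single m (s - Finsupp.single i 1) i'
  have h4 := wsum_add_single m (s - Finsupp.single i 1) i
  rw [← single_decomp m s i hsi] at h4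
  refine Submodule.subset_span ⟨⟨Finsupp.equivFunOnFinite
    ((s - Finsupp.single i 1) + Finsupp.single i' 1), ?_, ?_⟩, ?_⟩
  · show (∑ j : Fin (m+1),
      ((s - Finsupp.single i 1) + Finsupp.single i' 1 : Fin (m+1) →₀ ℕ) j) = n
    omega
  · show (∑ j : Fin (m+1),
      (j : ℕ) * ((s - Finsupp.single i 1) + Finsupp.single i' 1 : Fin (m+1) →₀ ℕ) j) = t'
    omega
  · show monomial (Finsupp.equivFunOnFinite.symm (Finsupp.equivFunOnFinite
      ((s - Finsupp.single i 1) + Finsupp.single i' 1))) (1 : ℚ) = _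
    rw [Equiv.symm_apply_apply]

lemma s_sum (m n t : ℕ) (d : DIdx m n t) :
    ∑ j : Fin (m+1), (Finsupp.equivFunOnFinite.symm d.1) j = n := d.2.1

lemma s_wsum (m n t : ℕ) (d : DIdx m n t) :
    ∑ j : Fin (m+1), (j : ℕ) * (Finsupp.equivFunOnFinite.symm d.1) j = t := d.2.2

lemma Fgen (m n t : ℕ) (d : DIdx m n t) : Fop m (bfam m n t d) ∈ Wsp m n (t+1) := by
  classical
  rw [bfam, Fop, mkDer_monomial]
  refine Submodule.sum_mem _ fun i _ => ?_
  by_cases hsi : (Finsupp.equivFunOnFinite.symm d.1) i = 0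
  · rw [hsi, Nat.cast_zero, monomial_zero, zero_smul]
    exact Submodule.zero_mem _
  · by_cases him : (i : ℕ) < m
    · rw [dif_pos him, term_eq1]
      refine Submodule.smul_mem _ _ (mem_step m n _ i _ hsi (t+1) (s_sum m n t d) ?_)
      rw [s_wsum m n t d]
      show t + ((i : ℕ) + 1) = (t + 1) + (i : ℕ)
      omega
    · rw [dif_neg him, smul_zero]
      exact Submodule.zero_mem _

lemma Egen (m n t : ℕ) (d : DIdx m n (t+1)) : Eop m (bfam m n (t+1) d) ∈ Wsp m n t := by
  classical
  rw [bfam, Eop, mkDer_monomial]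
  refine Submodule.sum_mem _ fun i _ => ?_
  by_cases hsi : (Finsupp.equivFunOnFinite.symm d.1) i = 0
  · rw [hsi, Nat.cast_zero, monomial_zero, zero_smul]
    exact Submodule.zero_mem _
  · by_cases hi0 : (i : ℕ) = 0
    · rw [show (((i : ℕ) : ℚ) * ((m : ℚ) + 1 - ((i : ℕ) : ℚ))) = 0 by rw [hi0]; norm_num,
        zero_smul, smul_zero]
      exact Submodule.zero_mem _
    · rw [term_eqc]
      refine Submodule.smul_mem _ _ (mem_step m n _ i _ hsi t (s_sum m n (t+1) d) ?_)
      rw [s_wsum m n (t+1) d]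
      show (t + 1) + ((i : ℕ) - 1) = t + (i : ℕ)
      omega

lemma Egen0 (m n : ℕ) (d : DIdx m n 0) : Eop m (bfam m n 0 d) = 0 := by
  classical
  rw [bfam, Eop, mkDer_monomial]
  refine Finset.sum_eq_zero fun i _ => ?_
  by_cases hi0 : (i : ℕ) = 0
  · rw [show (((i : ℕ) : ℚ) * ((m : ℚ) + 1 - ((i : ℕ) : ℚ))) = 0 by rw [hi0]; norm_num,
      zero_smul, smul_zero]
  · have hsi : (Finsupp.equivFunOnFinite.symm d.1) i = 0 := by
      have h2 := s_wsum m n 0 d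
      have h3 := Finset.sum_eq_zero_iff.mp h2 i (Finset.mem_univ i)
      rcases Nat.mul_eq_zero.mp h3 with h | h
      · omega
      · exact h
    rw [hsi, Nat.cast_zero, monomial_zero, zero_smul]

lemma Hgen (m n t : ℕ) (d : DIdx m n t) :
    Hop m (bfam m n t d) = ((m : ℚ) * n - 2 * t) • bfam m n t d := by
  classical
  rw [bfam, Hop, mkDer_monomial]
  have hterm : ∀ i : Fin (m+1),
      monomial ((Finsupp.equivFunOnFinite.symm d.1) - Finsupp.single i 1)
          (((Finsupp.equivFunOnFinite.symm d.1) i : ℕ) : ℚ) •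
        (((m : ℚ) - 2 * ((i : ℕ) : ℚ)) • (X i : Pq m))
      = ((((Finsupp.equivFunOnFinite.symm d.1) i : ℕ) : ℚ) * ((m : ℚ) - 2 * ((i : ℕ) : ℚ))) •
          monomial (Finsupp.equivFunOnFinite.symm d.1) (1 : ℚ) := by
    intro i
    by_cases hsi : (Finsupp.equivFunOnFinite.symm d.1) i = 0
    · rw [hsi, Nat.cast_zero, monomial_zero, zero_smul, zero_mul, zero_smul]
    · rw [term_eqc, ← single_decomp m _ i hsi]
  rw [Finset.sum_congr rfl fun i _ => hterm i, ← Finset.sum_smul]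
  congr 1
  have h1 := s_sum m n t d
  have h2 := s_wsum m n t d
  have h3 : ∀ i : Fin (m+1),
      (((Finsupp.equivFunOnFinite.symm d.1) i : ℕ) : ℚ) * ((m : ℚ) - 2 * ((i : ℕ) : ℚ))
        = (m : ℚ) * (((Finsupp.equivFunOnFinite.symm d.1) i : ℕ) : ℚ)
          - 2 * ((((i : ℕ) * (Finsupp.equivFunOnFinite.symm d.1) i : ℕ)) : ℚ) := by
    intro i
    push_cast
    ring
  rw [Finset.sum_congr rfl fun i _ => h3 i, Finset.sum_sub_distrib, ← Finset.mul_sum,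
    ← Finset.mul_sum, ← Nat.cast_sum, ← Nat.cast_sum, h1, h2]

lemma Fmem (m n t : ℕ) : ∀ v ∈ Wsp m n t, Fop m v ∈ Wsp m n (t+1) := by
  intro v hv
  have hle : Wsp m n t ≤ Submodule.comap ((Fop m).toLinearMap) (Wsp m n (t+1)) := by
    rw [Submodule.span_le]
    rintro x ⟨d, rfl⟩
    exact Fgen m n t d
  exact hle hv

lemma Emem (m n t : ℕ) : ∀ v ∈ Wsp m n (t+1), Eop m v ∈ Wsp m n t := by
  intro v hv
  have hle : Wsp m n (t+1) ≤ Submodule.comap ((Eop m).toLinearMap) (Wsp m n t) := by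
    rw [Submodule.span_le]
    rintro x ⟨d, rfl⟩
    exact Egen m n t d
  exact hle hv

lemma Ezero (m n : ℕ) : ∀ v ∈ Wsp m n 0, Eop m v = 0 := by
  intro v hv
  have hle : Wsp m n 0 ≤ LinearMap.ker ((Eop m).toLinearMap) := by
    rw [Submodule.span_le]
    rintro x ⟨d, rfl⟩
    simp only [SetLike.mem_coe, LinearMap.mem_ker]
    exact Egen0 m n d
  have h0 := LinearMap.mem_ker.mp (hle hv)
  exact h0

lemma Hscalar (m n t : ℕ) : ∀ v ∈ Wsp m n t, Hop m v = ((m : ℚ) * n - 2 * t) • v := by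
  intro v hv
  have hle : Wsp m n t ≤ LinearMap.ker
      ((Hop m).toLinearMap - ((m : ℚ) * n - 2 * t) • LinearMap.id) := by
    rw [Submodule.span_le]
    rintro x ⟨d, rfl⟩
    simp only [SetLike.mem_coe, LinearMap.mem_ker, LinearMap.sub_apply, LinearMap.smul_apply,
      LinearMap.id_apply]
    rw [sub_eq_zero]
    exact Hgen m n t d
  have h := LinearMap.mem_ker.mp (hle hv)
  rw [LinearMap.sub_apply, LinearMap.smul_apply, LinearMap.id_apply, sub_eq_zero] at h
  exact h

lemma Enil (m n : ℕ) : ∀ t, ∀ v ∈ Wsp m n t, (⇑((Eop m).toLinearMap))^[t+1] v = 0 := by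
  intro t
  induction t with
  | zero =>
    intro v hv
    rw [Function.iterate_one]
    exact Ezero m n v hv
  | succ t ih =>
    intro v hv
    rw [Function.iterate_succ_apply]
    exact ih _ (Emem m n t v hv)

lemma card_DIdx_mono (m n l : ℕ) (h2 : 2 * (l + 1) ≤ m * n) :
    Nat.card (DIdx m n l) ≤ Nat.card (DIdx m n (l + 1)) := by
  classical
  have hFmaps : ∀ x ∈ Wsp m n l, ((Fop m).toLinearMap) x ∈ Wsp m n (l+1) := Fmem m n l
  set FL : (Wsp m n l) →ₗ[ℚ] (Wsp m n (l+1)) := ((Fop m).toLinearMap).restrict hFmaps with hFL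
  have hinj : Function.Injective FL := by
    intro x y hxy
    have hsub : FL (x - y) = 0 := by rw [map_sub, hxy, sub_self]
    have hzero : Fop m ((x - y : Wsp m n l) : Pq m) = 0 := by
      have h := congrArg Subtype.val hsub
      simpa [hFL, LinearMap.restrict_apply] using h
    have hv : ((x - y : Wsp m n l) : Pq m) = 0 := by
      refine sl2_vanish ((Eop m).toLinearMap) ((Fop m).toLinearMap) ((Hop m).toLinearMap)
        (fun v => EF_eq_H m v) (fun v => HE_eq m v) ((m : ℚ) * n - 2 * l) ?_ _ ?_ hzero
        (l + 1) ?_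
      · have hc : ((2 * (l + 1) : ℕ) : ℚ) ≤ ((m * n : ℕ) : ℚ) := Nat.cast_le.mpr h2
        push_cast at hc
        linarith
      · exact Hscalar m n l _ (x - y).2
      · exact Enil m n l _ (x - y).2
    have hxy0 : (x - y : Wsp m n l) = 0 := Subtype.ext hv
    exact sub_eq_zero.mp hxy0
  haveI : Fintype (DIdx m n l) := Fintype.ofFinite _
  haveI : Fintype (DIdx m n (l+1)) := Fintype.ofFinite _
  haveI : FiniteDimensional ℚ (Wsp m n (l+1)) :=
    FiniteDimensional.span_of_finite ℚ (Set.finite_range _)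
  have hr1 : Module.finrank ℚ (Wsp m n l) = Fintype.card (DIdx m n l) :=
    finrank_span_eq_card (bfam_li m n l)
  have hr2 : Module.finrank ℚ (Wsp m n (l+1)) = Fintype.card (DIdx m n (l+1)) :=
    finrank_span_eq_card (bfam_li m n (l+1))
  have hle := LinearMap.finrank_le_finrank_of_injective hinj
  rw [Nat.card_eq_fintype_card, Nat.card_eq_fintype_card, ← hr1, ← hr2]
  exact hle



end CS10

/-- **Cayley–Sylvester, bijective form.** For `1 ≤ ℓ ≤ mn/2` there is a
bijection between plethystic semistandard tableaux of outer shape `(n)`, inner shape `(m)`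
with entries in `{1,2}` and total number of `2`s equal to `ℓ` (a weakly colex-increasing
sequence of `n` weakly increasing rows), and partitions of `ℓ` contained in an `m × n`
box; consequently the number of box partitions of `ℓ - 1` is at most that of `ℓ`. -/
theorem cayley_sylvester_bijection (m n L : ℕ) (h1 : 1 ≤ L) (h2 : 2 * L ≤ m * n) :
    Nonempty
      ({T : Fin n → Fin m → ℕ //
          (∀ i j, T i j = 1 ∨ T i j = 2) ∧
          (∀ i, Monotone (T i)) ∧
          (∀ i₁ i₂ : Fin n, i₁ ≤ i₂ → ColexLeRow m (T i₁) (T i₂)) ∧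
          (∑ i, (Finset.univ.filter fun j => T i j = 2).card) = L} ≃
        {p : Fin n → ℕ // Antitone p ∧ (∀ i, p i ≤ m) ∧ ∑ i, p i = L}) ∧
    Nat.card {p : Fin n → ℕ // Antitone p ∧ (∀ i, p i ≤ m) ∧ ∑ i, p i = L - 1} ≤
      Nat.card {p : Fin n → ℕ // Antitone p ∧ (∀ i, p i ≤ m) ∧ ∑ i, p i = L} := by
  constructor
  · exact ⟨CS10.part1Equiv m n L⟩
  · obtain ⟨l, rfl⟩ : ∃ l, L = l + 1 := ⟨L - 1, by omega⟩
    simp only [Nat.add_sub_cancel]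
    calc Nat.card {p : Fin n → ℕ // Antitone p ∧ (∀ i, p i ≤ m) ∧ ∑ i, p i = l}
        ≤ Nat.card (CS10.DIdx m n l) := CS10.card_part_le_DIdx m n l
      _ ≤ Nat.card (CS10.DIdx m n (l + 1)) := CS10.card_DIdx_mono m n l h2
      _ ≤ Nat.card {p : Fin n → ℕ // Antitone p ∧ (∀ i, p i ≤ m) ∧ ∑ i, p i = l + 1} :=
          CS10.card_DIdx_le_part m n (l + 1)
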